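/- Let π, π̃ ∈ S(n) be permutations with geometric representations sharing x-coordinates, where π has y-coordinates y_i = (π(i)−0.5)/n, and suppose for all i in a set S ⊆ [n] we have |y_i − ỹ_i| ≤ 2√δ where ỹ_i are distinct y-coordinates representing π̃. Then for each i ∈ S, |π(i) − π̃(i)| ≤ 4√δ·n + |[n]\S|, and consequently Σ_{i=1}^n |π(i) − π̃(i)| ≤ (4√δ + |[n]\S|/n)·n² + |[n]\S|·n. -/

import Mathlib

open Finset

lemma aux_card_fin (n v : ℕ) (hv : v < n) :
    (univ.filter fun k : Fin n => (k : ℕ) ≤ v).card = v + 1 := by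
  rw [← Finset.card_range (v+1)]
  refine Finset.card_bij' (fun k _ => (k:ℕ)) (fun m hm => (⟨m, ?_⟩ : Fin n)) ?_ ?_ ?_ ?_
  · simp at hm; omega
  · intro k hk; simp at hk ⊢; omega
  · intro m hm; simp at hm ⊢; omega
  · intro k hk; simp
  · intro m hm; simp


/-- If `π̃` is induced by distinct reals `ty i` and for all `i` in a set
`S` the `ty i` are within `2√δ` of the canonical y-coordinates `y i = (π(i)+0.5)/n`
of `π` (0-based values), then each `i ∈ S` satisfies
`|π(i) − π̃(i)| ≤ 4√δ·n + |[n]\S|`, and the total displacement is at most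
`(4√δ + |[n]\S|/n)·n² + |[n]\S|·n`. -/
theorem stmt14 (n : ℕ) (hn : 0 < n) (π πt : Equiv.Perm (Fin n)) (δ : ℝ) (hδ : 0 ≤ δ)
    (ty : Fin n → ℝ) (hinj : Function.Injective ty)
    (hind : ∀ i : Fin n, (πt i : ℕ) + 1 = (univ.filter fun j => ty j ≤ ty i).card)
    (S : Finset (Fin n))
    (hclose : ∀ i ∈ S, |((π i : ℝ) + 0.5) / n - ty i| ≤ 2 * Real.sqrt δ) :
    (∀ i ∈ S, |(π i : ℝ) - (πt i : ℝ)| ≤ 4 * Real.sqrt δ * n + ((n : ℝ) - S.card)) ∧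
    ∑ i : Fin n, |(π i : ℝ) - (πt i : ℝ)| ≤
      (4 * Real.sqrt δ + ((n : ℝ) - S.card) / n) * n ^ 2 + ((n : ℝ) - S.card) * n := by
  have hn' : (0:ℝ) < n := by exact_mod_cast hn
  set s := Real.sqrt δ with hs
  have hs0 : 0 ≤ s := Real.sqrt_nonneg δ
  have hSn : S.card ≤ n := by simpa using Finset.card_le_univ S
  have hSle : (S.card : ℝ) ≤ n := by exact_mod_cast hSn
  have hc0 : 0 ≤ (n:ℝ) - S.card := by linarith
  have hcompl : ((univ \ S).card : ℝ) = (n:ℝ) - S.card := by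
    rw [Finset.card_sdiff_of_subset (Finset.subset_univ S), Finset.card_univ, Fintype.card_fin]
    exact Nat.cast_sub hSn
  have houtS : ∀ X : Finset (Fin n), ((X \ S).card : ℝ) ≤ (n:ℝ) - S.card := by
    intro X
    have h : (X \ S).card ≤ (univ \ S).card :=
      Finset.card_le_card (Finset.sdiff_subset_sdiff (Finset.subset_univ X) le_rfl)
    calc ((X \ S).card : ℝ) ≤ ((univ \ S).card : ℝ) := by exact_mod_cast h
      _ = _ := hcompl
  have hfloor : ((Nat.floor (4*s*(n:ℝ)) : ℕ) : ℝ) ≤ 4*s*n := Nat.floor_le (by positivity)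
  have hchain : ∀ j ∈ S, ((π j:ℝ)+0.5)/n - 2*s ≤ ty j ∧ ty j ≤ ((π j:ℝ)+0.5)/n + 2*s := by
    intro j hj
    have h := abs_le.mp (hclose j hj)
    constructor <;> linarith [h.1, h.2]
  have key : ∀ i ∈ S, |(π i : ℝ) - (πt i : ℝ)| ≤ 4 * s * n + ((n : ℝ) - S.card) := by
    intro i hi
    set F := univ.filter (fun j => ty j ≤ ty i) with hFdef
    set P := univ.filter (fun j : Fin n => (π j : ℕ) ≤ (π i : ℕ)) with hPdef
    have hFcard : (F.card : ℝ) = (πt i : ℝ) + 1 := by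
      rw [← hind i]; push_cast; ring
    have hPcard : P.card = (π i : ℕ) + 1 := by
      have h1 : P.card = (univ.filter fun k : Fin n => (k:ℕ) ≤ (π i:ℕ)).card := by
        refine Finset.card_bij (fun j _ => π j) ?_ ?_ ?_
        · intro j hj; simp only [hPdef, Finset.mem_filter, Finset.mem_univ, true_and] at hj ⊢
          exact hj
        · intro j1 h1 j2 h2 h; exact π.injective h
        · intro k hk
          refine ⟨π.symm k, ?_, by simp⟩
          simp only [hPdef, Finset.mem_filter, Finset.mem_univ, true_and] at hk ⊢
          simpa using hk
      rw [h1, aux_card_fin n _ (π i).isLt]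
    have hPcardR : (P.card : ℝ) = (π i : ℝ) + 1 := by rw [hPcard]; push_cast; ring
    -- Direction 1 : bound (F \ P) ∩ S
    have hFPin : (((F \ P) ∩ S).card : ℝ) ≤ 4*s*n := by
      have hcard : ((F \ P) ∩ S).card ≤ (Finset.range (Nat.floor (4*s*(n:ℝ)))).card := by
        apply Finset.card_le_card_of_injOn (fun j => (π j:ℕ) - (π i:ℕ) - 1)
        · intro j hj
          simp only [Finset.mem_coe, Finset.mem_inter, Finset.mem_sdiff, hFdef, hPdef, Finset.mem_filter,
            Finset.mem_univ, true_and] at hj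
          obtain ⟨⟨hty, hlt⟩, hjS⟩ := hj
          push_neg at hlt
          have h1 := (hchain j hjS).1
          have h2 := (hchain i hi).2
          have hle : ((π j:ℝ)+0.5)/n ≤ ((π i:ℝ)+0.5)/n + 4*s := by linarith
          have hmul : ((π j:ℝ)+0.5) ≤ ((π i:ℝ)+0.5) + 4*s*n := by
            have h3 := mul_le_mul_of_nonneg_right hle hn'.le
            rwa [div_mul_cancel₀ _ (ne_of_gt hn'), add_mul,
              div_mul_cancel₀ _ (ne_of_gt hn')] at h3
          simp only [Finset.mem_coe, Finset.mem_range]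
          have hm1 : ((π j:ℕ) - (π i:ℕ) - 1) + 1 ≤ Nat.floor (4*s*(n:ℝ)) := by
            apply Nat.le_floor
            have he : ((π j:ℕ) - (π i:ℕ) - 1) + 1 = (π j:ℕ) - (π i:ℕ) := by omega
            rw [he, Nat.cast_sub (le_of_lt hlt)]
            linarith
          omega
        · intro j1 h1 j2 h2 heq
          simp only [Finset.mem_coe, Finset.mem_inter, Finset.mem_sdiff, hFdef, hPdef,
            Finset.mem_filter, Finset.mem_univ, true_and] at h1 h2
          have l1 := lt_of_not_ge h1.1.2
          have l2 := lt_of_not_ge h2.1.2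
          simp only at heq
          have hv : (π j1:ℕ) = (π j2:ℕ) := by omega
          exact π.injective (Fin.ext hv)
      calc (((F \ P) ∩ S).card : ℝ)
          ≤ ((Finset.range (Nat.floor (4*s*(n:ℝ)))).card : ℝ) := by exact_mod_cast hcard
        _ = ((Nat.floor (4*s*(n:ℝ)) : ℕ) : ℝ) := by rw [Finset.card_range]
        _ ≤ 4*s*n := hfloor
    -- Direction 2 : bound (P \ F) ∩ S
    have hPFin : (((P \ F) ∩ S).card : ℝ) ≤ 4*s*n := by
      have hcard : ((P \ F) ∩ S).card ≤ (Finset.range (Nat.floor (4*s*(n:ℝ)))).card := by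
        apply Finset.card_le_card_of_injOn (fun j => (π i:ℕ) - (π j:ℕ) - 1)
        · intro j hj
          simp only [Finset.mem_coe, Finset.mem_inter, Finset.mem_sdiff, hFdef, hPdef, Finset.mem_filter,
            Finset.mem_univ, true_and] at hj
          obtain ⟨⟨hle', hty⟩, hjS⟩ := hj
          push_neg at hty
          have hne : j ≠ i := by
            intro h; subst h; exact lt_irrefl _ hty
          have hvne : (π j:ℕ) ≠ (π i:ℕ) := fun h => hne (π.injective (Fin.ext h))
          have hlt : (π j:ℕ) < (π i:ℕ) := lt_of_le_of_ne hle' hvne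
          have h1 := (hchain j hjS).2
          have h2 := (hchain i hi).1
          have hle2 : ((π i:ℝ)+0.5)/n < ((π j:ℝ)+0.5)/n + 4*s := by linarith
          have hmul : ((π i:ℝ)+0.5) < ((π j:ℝ)+0.5) + 4*s*n := by
            have h3 := mul_lt_mul_of_pos_right hle2 hn'
            rwa [div_mul_cancel₀ _ (ne_of_gt hn'), add_mul,
              div_mul_cancel₀ _ (ne_of_gt hn')] at h3
          simp only [Finset.mem_coe, Finset.mem_range]
          have hm1 : ((π i:ℕ) - (π j:ℕ) - 1) + 1 ≤ Nat.floor (4*s*(n:ℝ)) := by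
            apply Nat.le_floor
            have he : ((π i:ℕ) - (π j:ℕ) - 1) + 1 = (π i:ℕ) - (π j:ℕ) := by omega
            rw [he, Nat.cast_sub (le_of_lt hlt)]
            linarith
          omega
        · intro j1 h1 j2 h2 heq
          simp only [Finset.mem_coe, Finset.mem_inter, Finset.mem_sdiff, hFdef, hPdef,
            Finset.mem_filter, Finset.mem_univ, true_and] at h1 h2
          have hne1 : j1 ≠ i := by
            intro h; subst h; exact h1.1.2 le_rfl
          have hne2 : j2 ≠ i := by
            intro h; subst h; exact h2.1.2 le_rfl
          have l1 : (π j1:ℕ) < (π i:ℕ) :=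
            lt_of_le_of_ne h1.1.1 (fun h => hne1 (π.injective (Fin.ext h)))
          have l2 : (π j2:ℕ) < (π i:ℕ) :=
            lt_of_le_of_ne h2.1.1 (fun h => hne2 (π.injective (Fin.ext h)))
          simp only at heq
          have hv : (π j1:ℕ) = (π j2:ℕ) := by omega
          exact π.injective (Fin.ext hv)
      calc (((P \ F) ∩ S).card : ℝ)
          ≤ ((Finset.range (Nat.floor (4*s*(n:ℝ)))).card : ℝ) := by exact_mod_cast hcard
        _ = ((Nat.floor (4*s*(n:ℝ)) : ℕ) : ℝ) := by rw [Finset.card_range]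
        _ ≤ 4*s*n := hfloor
    -- combine
    have hF_le : (F.card:ℝ) ≤ (P.card:ℝ) + (4*s*n + ((n:ℝ) - S.card)) := by
      have h1 : F.card ≤ (F \ P).card + P.card := Finset.card_le_card_sdiff_add_card
      have h2 : ((F \ P) ∩ S).card + ((F \ P) \ S).card = (F \ P).card :=
        Finset.card_inter_add_card_sdiff _ _
      have h3 := houtS (F \ P)
      have h1' : (F.card:ℝ) ≤ ((F \ P).card:ℝ) + P.card := by exact_mod_cast h1
      have h2' : (((F \ P) ∩ S).card:ℝ) + (((F \ P) \ S).card:ℝ) = ((F \ P).card:ℝ) := by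
        exact_mod_cast h2
      linarith
    have hP_le : (P.card:ℝ) ≤ (F.card:ℝ) + (4*s*n + ((n:ℝ) - S.card)) := by
      have h1 : P.card ≤ (P \ F).card + F.card := Finset.card_le_card_sdiff_add_card
      have h2 : ((P \ F) ∩ S).card + ((P \ F) \ S).card = (P \ F).card :=
        Finset.card_inter_add_card_sdiff _ _
      have h3 := houtS (P \ F)
      have h1' : (P.card:ℝ) ≤ ((P \ F).card:ℝ) + F.card := by exact_mod_cast h1
      have h2' : (((P \ F) ∩ S).card:ℝ) + (((P \ F) \ S).card:ℝ) = ((P \ F).card:ℝ) := by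
        exact_mod_cast h2
      linarith
    rw [abs_le]
    constructor <;> linarith
  refine ⟨key, ?_⟩
  have habs : ∀ i : Fin n, |(π i:ℝ) - (πt i:ℝ)| ≤ n := by
    intro i
    have h1 : ((π i:ℕ):ℝ) < n := by exact_mod_cast (π i).isLt
    have h2 : ((πt i:ℕ):ℝ) < n := by exact_mod_cast (πt i).isLt
    have h3 : (0:ℝ) ≤ ((π i:ℕ):ℝ) := Nat.cast_nonneg _
    have h4 : (0:ℝ) ≤ ((πt i:ℕ):ℝ) := Nat.cast_nonneg _
    rw [abs_le]; constructor <;> push_cast <;> linarith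
  have hsum1 : ∑ i ∈ S, |(π i:ℝ) - (πt i:ℝ)| ≤ S.card • (4*s*n + ((n:ℝ) - S.card)) :=
    Finset.sum_le_card_nsmul S _ _ key
  have hsum2 : ∑ i ∈ univ \ S, |(π i:ℝ) - (πt i:ℝ)| ≤ (univ \ S).card • (n:ℝ) :=
    Finset.sum_le_card_nsmul _ _ _ (fun i _ => habs i)
  have hsplit := Finset.sum_sdiff (f := fun i => |(π i:ℝ) - (πt i:ℝ)|) (Finset.subset_univ S)
  rw [nsmul_eq_mul] at hsum1 hsum2
  rw [hcompl] at hsum2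
  have hSmul : (S.card:ℝ) * (4*s*n + ((n:ℝ) - S.card)) ≤ (n:ℝ) * (4*s*n + ((n:ℝ) - S.card)) :=
    mul_le_mul_of_nonneg_right hSle (add_nonneg (by positivity) hc0)
  have hring : (n:ℝ) * (4*s*n + ((n:ℝ) - S.card)) = 4*s*n^2 + ((n:ℝ) - S.card)*n := by ring
  have hdiv : ((n:ℝ) - S.card)/n * n^2 = ((n:ℝ) - S.card) * n := by
    field_simp
  have htarget : (4*s + ((n:ℝ) - S.card)/n) * (n:ℝ)^2
      = 4*s*(n:ℝ)^2 + ((n:ℝ) - S.card)*n := by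
    rw [add_mul, hdiv]
  linarith [hsplit.symm.le, hsplit.le]
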